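/- For integers $n \ge 2$ and $d \ge 2$, the number of 'good' partitions of $\{1,\ldots,n\}$ into $d$ parts (i.e., partitions $\{A_1,\ldots,A_d\}$ where $A_1 \sqcup A_2$ is an initial segment of $\{1,\ldots,n\}$ and $A_3,\ldots,A_d$ are intervals of consecutive integers) equals $\sum_{i \le n-d,\ i \equiv n-d \pmod 2} \binom{n}{i}$. -/

import Mathlib

/-- `P` is a partition of `Fin n` (into nonempty, pairwise covering parts). -/
def IsPartitionOf (n : ℕ) (P : Finset (Finset (Fin n))) : Prop :=
  (∀ A ∈ P, A.Nonempty) ∧ (∀ x : Fin n, ∃! A, A ∈ P ∧ x ∈ A)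

/-- `P` is a good partition: it can be written as `{A₁,…,A_d}` where `A₁ ⊔ A₂` is an
initial segment of `{1,…,n}` and the remaining parts are intervals of consecutive
integers. -/
def IsGoodPartition (n : ℕ) (P : Finset (Finset (Fin n))) : Prop :=
  ∃ A1 ∈ P, ∃ A2 ∈ P, A1 ≠ A2 ∧
    (∃ m : ℕ, A1 ∪ A2 = Finset.univ.filter (fun x : Fin n => (x : ℕ) < m)) ∧
    (∀ A ∈ P, A ≠ A1 → A ≠ A2 →
      ∃ l m : ℕ, A = Finset.univ.filter (fun x : Fin n => l ≤ (x : ℕ) ∧ (x : ℕ) < m))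


open Finset

def Rf (n d : ℕ) : ℕ :=
  ∑ i ∈ (Finset.range (n + 1)).filter
      (fun i : ℕ => (i : ℤ) ≤ (n : ℤ) - d ∧ ((n : ℤ) - d - i) % 2 = 0), n.choose i

def Tf (n d : ℕ) : ℕ :=
  if d = 2 then 2^(n-1) - 1
  else ∑ k ∈ Finset.Ico 2 n, (2^(k-1) - 1) * Nat.choose (n - k - 1) (d - 3)

lemma Rf_eq_sum_ite (n d : ℕ) :
    Rf n d = ∑ i ∈ Finset.range (n+1),
      (if ((i : ℤ) ≤ (n : ℤ) - d ∧ ((n : ℤ) - d - i) % 2 = 0) then n.choose i else 0) := by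
  classical
  rw [Rf, Finset.sum_filter]

lemma Rf_zero_of_lt {n d : ℕ} (h : n < d) : Rf n d = 0 := by
  rw [Rf]
  apply Finset.sum_eq_zero
  intro i hi
  simp only [mem_filter] at hi
  exfalso
  have := hi.2.1
  omega

lemma Rf_rec (m e : ℕ) :
    Rf (m+1) (e+1) = Rf m e + Rf m (e+1) := by
  classical
  have h1 : Rf (m+1) (e+1)
      = ∑ i ∈ Finset.range (m+1),
          ((if ((i:ℤ)+1 ≤ (m:ℤ) - e ∧ ((m:ℤ) - e - (i+1)) % 2 = 0) then m.choose i else 0)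
          + (if ((i:ℤ)+1 ≤ (m:ℤ) - e ∧ ((m:ℤ) - e - (i+1)) % 2 = 0) then m.choose (i+1) else 0))
        + (if ((0:ℤ) ≤ (m:ℤ) - e ∧ ((m:ℤ) - e) % 2 = 0) then 1 else 0) := by
    rw [Rf_eq_sum_ite, Finset.sum_range_succ']
    refine congrArg₂ (· + ·) ?_ ?_
    · apply Finset.sum_congr rfl
      intro i _
      rw [Nat.choose_succ_succ' m i]
      have hiff : (((i+1:ℕ):ℤ) ≤ ((m+1:ℕ):ℤ) - ((e+1:ℕ):ℤ) ∧
          (((m+1:ℕ):ℤ) - ((e+1:ℕ):ℤ) - ((i+1:ℕ):ℤ)) % 2 = 0)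
          ↔ ((i:ℤ)+1 ≤ (m:ℤ) - e ∧ ((m:ℤ) - e - ((i:ℤ)+1)) % 2 = 0) := by
        push_cast; omega
      rw [if_congr hiff rfl rfl]
      split <;> simp
    · have hiff : (((0:ℕ):ℤ) ≤ ((m+1:ℕ):ℤ) - ((e+1:ℕ):ℤ) ∧
          (((m+1:ℕ):ℤ) - ((e+1:ℕ):ℤ) - ((0:ℕ):ℤ)) % 2 = 0)
          ↔ ((0:ℤ) ≤ (m:ℤ) - e ∧ ((m:ℤ) - e) % 2 = 0) := by
        push_cast; omega
      rw [if_congr hiff rfl rfl]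
      simp
  have h2 : Rf m e
      = ∑ i ∈ Finset.range m,
          (if ((i:ℤ)+1 ≤ (m:ℤ) - e ∧ ((m:ℤ) - e - (i+1)) % 2 = 0) then m.choose (i+1) else 0)
        + (if ((0:ℤ) ≤ (m:ℤ) - e ∧ ((m:ℤ) - e) % 2 = 0) then 1 else 0) := by
    rw [Rf_eq_sum_ite, Finset.sum_range_succ']
    refine congrArg₂ (· + ·) ?_ ?_
    · apply Finset.sum_congr rfl
      intro i _
      have hiff : (((i+1:ℕ):ℤ) ≤ (m:ℤ) - (e:ℤ) ∧ ((m:ℤ) - (e:ℤ) - ((i+1:ℕ):ℤ)) % 2 = 0)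
          ↔ ((i:ℤ)+1 ≤ (m:ℤ) - e ∧ ((m:ℤ) - e - ((i:ℤ)+1)) % 2 = 0) := by
        push_cast; omega
      rw [if_congr hiff rfl rfl]
    · have hiff : (((0:ℕ):ℤ) ≤ (m:ℤ) - (e:ℤ) ∧ ((m:ℤ) - (e:ℤ) - ((0:ℕ):ℤ)) % 2 = 0)
          ↔ ((0:ℤ) ≤ (m:ℤ) - e ∧ ((m:ℤ) - e) % 2 = 0) := by
        push_cast; omega
      rw [if_congr hiff rfl rfl]
      simp
  have h3 : Rf m (e+1)
      = ∑ i ∈ Finset.range (m+1),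
          (if ((i:ℤ)+1 ≤ (m:ℤ) - e ∧ ((m:ℤ) - e - (i+1)) % 2 = 0) then m.choose i else 0) := by
    rw [Rf_eq_sum_ite]
    apply Finset.sum_congr rfl
    intro i _
    have hiff : ((i:ℤ) ≤ (m:ℤ) - ((e+1:ℕ):ℤ) ∧ ((m:ℤ) - ((e+1:ℕ):ℤ) - (i:ℤ)) % 2 = 0)
        ↔ ((i:ℤ)+1 ≤ (m:ℤ) - e ∧ ((m:ℤ) - e - ((i:ℤ)+1)) % 2 = 0) := by
      push_cast; omega
    rw [if_congr hiff rfl rfl]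
  have h4 : ∑ i ∈ Finset.range (m+1),
          (if ((i:ℤ)+1 ≤ (m:ℤ) - e ∧ ((m:ℤ) - e - (i+1)) % 2 = 0) then m.choose (i+1) else 0)
      = ∑ i ∈ Finset.range m,
          (if ((i:ℤ)+1 ≤ (m:ℤ) - e ∧ ((m:ℤ) - e - (i+1)) % 2 = 0) then m.choose (i+1) else 0) := by
    rw [Finset.sum_range_succ, Nat.choose_succ_self]
    simp
  rw [h1, h2, h3, Finset.sum_add_distrib, h4]
  ring


lemma neg_one_pow_eq {i n : ℕ} (h : ((n:ℤ) - i) % 2 = 0) : (-1:ℤ)^i = (-1)^n := by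
  have he : Even ((n:ℤ) - i) := Int.even_iff.2 h
  rw [Int.even_sub] at he
  rcases Nat.even_or_odd n with hn | hn
  · have hi : Even i := by
      have : Even (i:ℤ) := he.1 (by exact_mod_cast hn)
      exact_mod_cast this
    rw [hi.neg_one_pow, hn.neg_one_pow]
  · have hi : Odd i := by
      rcases Nat.even_or_odd i with h2 | h2
      · exfalso
        have : Even (n:ℤ) := he.2 (by exact_mod_cast h2)
        have : Even n := by exact_mod_cast this
        exact (Nat.not_even_iff_odd.2 hn) this
      · exact h2
    rw [hi.neg_one_pow, hn.neg_one_pow]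

lemma half_sum (n : ℕ) (hn : 1 ≤ n) : Rf n 0 = 2^(n-1) := by
  classical
  set A : ℕ := ∑ i ∈ Finset.range (n+1),
      (if ((n:ℤ) - i) % 2 = 0 then n.choose i else 0) with hA
  set B : ℕ := ∑ i ∈ Finset.range (n+1),
      (if ¬ (((n:ℤ) - i) % 2 = 0) then n.choose i else 0) with hB
  have hRA : Rf n 0 = A := by
    rw [Rf_eq_sum_ite, hA]
    apply Finset.sum_congr rfl
    intro i hi
    rw [Finset.mem_range] at hi
    apply if_congr _ rfl rfl
    constructor
    · intro h; push_cast at h ⊢; omega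
    · intro h
      constructor
      · push_cast; omega
      · push_cast at h ⊢; omega
  have hAB : A + B = 2^n := by
    rw [hA, hB, ← Finset.sum_add_distrib]
    rw [← Nat.sum_range_choose n]
    apply Finset.sum_congr rfl
    intro i _
    split <;> simp_all
  have halt : ∑ i ∈ Finset.range (n+1), (-1:ℤ)^i * (n.choose i) = 0 := by
    rw [Int.alternating_sum_range_choose]
    simp [show n ≠ 0 by omega]
  have hsplit : ∑ i ∈ Finset.range (n+1), (-1:ℤ)^i * (n.choose i)
      = (-1)^n * ((A:ℤ) - (B:ℤ)) := by
    rw [hA, hB]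
    push_cast
    rw [← Finset.sum_sub_distrib, Finset.mul_sum]
    apply Finset.sum_congr rfl
    intro i _
    by_cases h : ((n:ℤ) - i) % 2 = 0
    · rw [if_pos h, if_neg (by simpa using h), neg_one_pow_eq h]
      ring
    · rw [if_neg h, if_pos h]
      have : (-1:ℤ)^i = -(-1)^n := by
        have h2 : ((n:ℤ) - (i+1)) % 2 = 0 := by omega
        have := neg_one_pow_eq (i := i+1) (n := n) (by push_cast; omega)
        rw [pow_succ] at this
        linarith [this]
      rw [this]
      ring
  have hABeq : A = B := by
    have h0 : (-1:ℤ)^n * ((A:ℤ) - (B:ℤ)) = 0 := by rw [← hsplit, halt]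
    rcases mul_eq_zero.1 h0 with h | h
    · exfalso
      rcases Nat.even_or_odd n with he | he
      · rw [he.neg_one_pow] at h; norm_num at h
      · rw [he.neg_one_pow] at h; norm_num at h
    · have : (A:ℤ) = B := by linarith
      exact_mod_cast this
  have h2A : A + A = 2^n := by rw [hABeq] at hAB ⊢; omega
  have hpow : 2^(n-1) * 2 = 2^n := by
    rw [← pow_succ]
    congr 1
    omega
  omega

lemma R1 (n : ℕ) (hn : 1 ≤ n) : Rf n 1 = 2^(n-1) := by
  induction n with
  | zero => omega
  | succ m ih =>
    rcases Nat.eq_or_lt_of_le hn with h | h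
    · have : m = 0 := by omega
      subst this
      decide
    · have hm : 1 ≤ m := by omega
      have hrec := Rf_rec m 0
      norm_num at hrec
      rw [hrec, half_sum m hm, ih hm]
      have hpow : 2^(m-1) * 2 = 2^m := by rw [← pow_succ]; congr 1; omega
      simp only [Nat.add_sub_cancel]
      omega

lemma R2 (n : ℕ) (hn : 2 ≤ n) : Rf n 2 + 1 = 2^(n-1) := by
  induction n with
  | zero => omega
  | succ m ih =>
    rcases Nat.eq_or_lt_of_le hn with h | h
    · have : m = 1 := by omega
      subst this
      decide
    · have hm : 2 ≤ m := by omega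
      have hrec := Rf_rec m 1
      norm_num at hrec
      rw [hrec, R1 m (by omega)]
      have := ih hm
      have hpow : 2^(m-1) * 2 = 2^m := by rw [← pow_succ]; congr 1; omega
      simp only [Nat.add_sub_cancel]
      omega

lemma R3 (n : ℕ) (hn : 2 ≤ n) : Rf n 3 + n = 2^(n-1) := by
  induction n with
  | zero => omega
  | succ m ih =>
    rcases Nat.eq_or_lt_of_le hn with h | h
    · have : m = 1 := by omega
      subst this
      decide
    · have hm : 2 ≤ m := by omega
      have hrec := Rf_rec m 2
      norm_num at hrec
      rw [hrec]
      have h2 := R2 m hm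
      have h3 := ih hm
      have hpow : 2^(m-1) * 2 = 2^m := by rw [← pow_succ]; congr 1; omega
      simp only [Nat.add_sub_cancel]
      omega

lemma Tf3_sum (n : ℕ) : Tf n 3 = ∑ k ∈ Finset.Ico 2 n, (2^(k-1) - 1) := by
  rw [Tf, if_neg (by norm_num)]
  apply Finset.sum_congr rfl
  intro k _
  norm_num

lemma T3 (n : ℕ) (hn : 2 ≤ n) : Tf n 3 + n = 2^(n-1) := by
  induction n with
  | zero => omega
  | succ m ih =>
    rcases Nat.eq_or_lt_of_le hn with h | h
    · have : m = 1 := by omega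
      subst this
      rw [Tf3_sum]
      simp
    · have hm : 2 ≤ m := by omega
      rw [Tf3_sum, Finset.sum_Ico_succ_top hm, ← Tf3_sum]
      have h3 := ih hm
      have hpow : 2^(m-1) * 2 = 2^m := by rw [← pow_succ]; congr 1; omega
      have hone : 1 ≤ 2^(m-1) := Nat.one_le_two_pow
      simp only [Nat.add_sub_cancel]
      omega

lemma Trec (m e : ℕ) (hm : 2 ≤ m) (he : 3 ≤ e) :
    Tf (m+1) (e+1) = Tf m e + Tf m (e+1) := by
  rw [Tf, if_neg (by omega), Tf, if_neg (by omega), Tf, if_neg (by omega)]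
  rw [Finset.sum_Ico_succ_top hm]
  have hlast : (2^(m-1) - 1) * Nat.choose (m + 1 - m - 1) (e + 1 - 3) = 0 := by
    have h0 : m + 1 - m - 1 = 0 := by omega
    rw [h0, Nat.choose_eq_zero_of_lt (by omega)]
    ring
  rw [hlast, add_zero, ← Finset.sum_add_distrib]
  apply Finset.sum_congr rfl
  intro k hk
  rw [Finset.mem_Ico] at hk
  rw [← Nat.mul_add]
  congr 1
  have h1 : m + 1 - k - 1 = (m - k - 1) + 1 := by omega
  have h2 : e + 1 - 3 = (e - 3) + 1 := by omega
  rw [h1, h2, Nat.choose_succ_succ]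

lemma TR (n : ℕ) (hn : 2 ≤ n) : ∀ d, 2 ≤ d → Tf n d = Rf n d := by
  induction n with
  | zero => omega
  | succ m ih =>
    intro d hd
    rcases Nat.eq_or_lt_of_le hn with h | h
    · -- n = 2
      have hm : m = 1 := by omega
      subst hm
      rcases Nat.eq_or_lt_of_le hd with h2 | h2
      · rw [← h2]
        have := R2 2 (by norm_num)
        have ht : Tf 2 2 = 1 := by rw [Tf]; norm_num
        show Tf 2 2 = Rf 2 2
        omega
      · have hz : Rf 2 d = 0 := Rf_zero_of_lt (by omega)
        rw [hz, Tf, if_neg (by omega)]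
        try simp
    · have hm : 2 ≤ m := by omega
      rcases Nat.eq_or_lt_of_le hd with h2 | h2
      · -- d = 2
        rw [← h2]
        have hr := R2 (m+1) (by omega)
        have ht : Tf (m+1) 2 = 2^m - 1 := by rw [Tf]; norm_num
        have hone : 1 ≤ 2^m := Nat.one_le_two_pow
        simp only [Nat.add_sub_cancel] at hr
        omega
      · rcases Nat.eq_or_lt_of_le h2 with h3 | h3
        · -- d = 3
          have hd3 : d = 3 := by omega
          subst hd3
          have ht := T3 (m+1) (by omega)
          have hr := R3 (m+1) (by omega)
          simp only [Nat.add_sub_cancel] at ht hr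
          omega
        · -- d ≥ 4
          obtain ⟨e, rfl⟩ : ∃ e, d = e + 1 := ⟨d - 1, by omega⟩
          rw [Trec m e hm (by omega), Rf_rec m e,
            ih hm e (by omega), ih hm (e+1) (by omega)]


def Ipart (n l m : ℕ) : Finset (Fin n) :=
  Finset.univ.filter (fun x => l ≤ (x:ℕ) ∧ (x:ℕ) < m)

def nxt (c : Finset ℕ) (n l : ℕ) : ℕ := WithTop.untopD n ((c.filter (fun t => l < t)).min)

def blocksOf (n k : ℕ) (c : Finset ℕ) : Finset (Finset (Fin n)) :=
  if k < n then (insert k c).image (fun l => Ipart n l (nxt c n l)) else ∅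

lemma mem_Ipart {n l m : ℕ} {x : Fin n} : x ∈ Ipart n l m ↔ l ≤ (x:ℕ) ∧ (x:ℕ) < m := by
  simp [Ipart]

lemma nxt_cases (c : Finset ℕ) (n l : ℕ) :
    nxt c n l = n ∨ (nxt c n l ∈ c ∧ l < nxt c n l) := by
  unfold nxt
  rcases h : (c.filter (fun t => l < t)).min with _ | t
  · left; rfl
  · right
    have ht : t ∈ c.filter (fun t => l < t) := Finset.mem_of_min h
    rw [Finset.mem_filter] at ht
    exact ⟨ht.1, ht.2⟩

lemma nxt_min {c : Finset ℕ} {n l t : ℕ} (ht : t ∈ c) (hlt : l < t) : nxt c n l ≤ t := by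
  have hmem : t ∈ c.filter (fun s => l < s) := by rw [Finset.mem_filter]; exact ⟨ht, hlt⟩
  have h := Finset.min_le hmem
  unfold nxt
  rcases hm : (c.filter (fun s => l < s)).min with _ | u
  · exfalso
    have he : (c.filter (fun s => l < s)) = ∅ := Finset.min_eq_top.1 hm
    rw [he] at hmem
    exact absurd hmem (Finset.notMem_empty t)
  · rw [hm] at h
    show u ≤ t
    exact WithTop.coe_le_coe.1 h

lemma nxt_gt {c : Finset ℕ} {n l : ℕ} (hln : l < n) : l < nxt c n l := by
  rcases nxt_cases c n l with h | ⟨_, h⟩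
  · omega
  · exact h

lemma mem_blocksOf {n k : ℕ} {c : Finset ℕ} {A : Finset (Fin n)} (hkn : k < n) :
    A ∈ blocksOf n k c ↔ ∃ l ∈ insert k c, A = Ipart n l (nxt c n l) := by
  rw [blocksOf, if_pos hkn, Finset.mem_image]
  constructor
  · rintro ⟨l, hl, h⟩; exact ⟨l, hl, h.symm⟩
  · rintro ⟨l, hl, h⟩; exact ⟨l, hl, h.symm⟩

section Blocks
variable {n k : ℕ} {c : Finset ℕ}

lemma block_key (hc : c ⊆ Finset.Ico (k+1) n) {l l' : ℕ} (hl : l ∈ insert k c)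
    (hl' : l' ∈ insert k c) (hll : l < l') {x : Fin n}
    (hx : x ∈ Ipart n l (nxt c n l)) (hx' : x ∈ Ipart n l' (nxt c n l')) : False := by
  have hlk : k ≤ l := by
    rcases Finset.mem_insert.1 hl with rfl | h
    · exact le_refl _
    · have := hc h
      rw [Finset.mem_Ico] at this
      omega
  have hl'c : l' ∈ c := by
    rcases Finset.mem_insert.1 hl' with rfl | h
    · omega
    · exact h
  rw [mem_Ipart] at hx hx'
  have := nxt_min (n := n) hl'c hll
  omega

lemma block_cover (hc : c ⊆ Finset.Ico (k+1) n) {x : Fin n} (hx : k ≤ (x:ℕ)) :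
    ∃ l ∈ insert k c, x ∈ Ipart n l (nxt c n l) := by
  have hne : ((insert k c).filter (fun l => l ≤ (x:ℕ))).Nonempty :=
    ⟨k, by simp [Finset.mem_filter, hx]⟩
  set l := ((insert k c).filter (fun l => l ≤ (x:ℕ))).max' hne with hl
  have hlmem := Finset.max'_mem _ hne
  rw [Finset.mem_filter] at hlmem
  refine ⟨l, hlmem.1, ?_⟩
  rw [mem_Ipart]
  refine ⟨hlmem.2, ?_⟩
  by_contra hcon
  push_neg at hcon
  rcases nxt_cases c n l with h | ⟨h1, h2⟩
  · have := x.isLt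
    omega
  · have : nxt c n l ≤ l := by
      apply Finset.le_max'
      rw [Finset.mem_filter]
      exact ⟨Finset.mem_insert_of_mem h1, hcon⟩
    omega

lemma block_nonempty (hc : c ⊆ Finset.Ico (k+1) n) (hkn : k < n) {l : ℕ}
    (hl : l ∈ insert k c) : (Ipart n l (nxt c n l)).Nonempty := by
  have hln : l < n := by
    rcases Finset.mem_insert.1 hl with rfl | h
    · exact hkn
    · have := hc h
      rw [Finset.mem_Ico] at this
      omega
  exact ⟨⟨l, hln⟩, by rw [mem_Ipart]; exact ⟨le_refl _, nxt_gt hln⟩⟩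

lemma block_ge (hc : c ⊆ Finset.Ico (k+1) n) {l : ℕ} (hl : l ∈ insert k c) {x : Fin n}
    (hx : x ∈ Ipart n l (nxt c n l)) : k ≤ (x:ℕ) := by
  have hlk : k ≤ l := by
    rcases Finset.mem_insert.1 hl with rfl | h
    · exact le_refl _
    · have := hc h
      rw [Finset.mem_Ico] at this
      omega
  rw [mem_Ipart] at hx
  omega

lemma block_injOn (hc : c ⊆ Finset.Ico (k+1) n) (hkn : k < n) :
    Set.InjOn (fun l => Ipart n l (nxt c n l)) (insert k c : Finset ℕ) := by
  intro l hl l' hl' heq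
  simp only [Finset.coe_insert, Set.mem_insert_iff, Finset.mem_coe] at hl hl'
  have hl2 : l ∈ insert k c := by rw [Finset.mem_insert]; exact hl
  have hl'2 : l' ∈ insert k c := by rw [Finset.mem_insert]; exact hl'
  simp only at heq
  rcases lt_trichotomy l l' with h | h | h
  · obtain ⟨x, hx⟩ := block_nonempty hc hkn hl2
    exact (block_key hc hl2 hl'2 h hx (heq ▸ hx)).elim
  · exact h
  · obtain ⟨x, hx⟩ := block_nonempty hc hkn hl'2
    exact (block_key hc hl'2 hl2 h hx (heq.symm ▸ hx)).elim

lemma card_blocksOf (hc : c ⊆ Finset.Ico (k+1) n) (hkn : k < n) :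
    (blocksOf n k c).card = c.card + 1 := by
  rw [blocksOf, if_pos hkn, Finset.card_image_of_injOn (block_injOn hc hkn),
    Finset.card_insert_of_notMem]
  intro h
  have := hc h
  rw [Finset.mem_Ico] at this
  omega

end Blocks

def SpartF (n : ℕ) (S : Finset ℕ) : Finset (Fin n) := Finset.univ.filter (fun x => (x:ℕ) ∈ S)

def TpartF (n k : ℕ) (S : Finset ℕ) : Finset (Fin n) :=
  Finset.univ.filter (fun x => (x:ℕ) < k ∧ (x:ℕ) ∉ S)

def buildP (n k : ℕ) (S c : Finset ℕ) : Finset (Finset (Fin n)) :=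
  insert (SpartF n S) (insert (TpartF n k S) (blocksOf n k c))

lemma mem_SpartF {n : ℕ} {S : Finset ℕ} {x : Fin n} : x ∈ SpartF n S ↔ (x:ℕ) ∈ S := by
  simp [SpartF]

lemma mem_TpartF {n k : ℕ} {S : Finset ℕ} {x : Fin n} :
    x ∈ TpartF n k S ↔ (x:ℕ) < k ∧ (x:ℕ) ∉ S := by
  simp [TpartF]

section Build

variable {n d k : ℕ} {S c : Finset ℕ}
variable (hk2 : 2 ≤ k) (hkn : k ≤ n) (hS : S ⊆ Finset.range k) (h0S : 0 ∈ S)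
  (hSne : S ≠ Finset.range k) (hc : c ⊆ Finset.Ico (k+1) n)

include hkn hS in
lemma SpartF_lt {x : Fin n} (hx : x ∈ SpartF n S) : (x:ℕ) < k := by
  rw [mem_SpartF] at hx
  have := hS hx
  rw [Finset.mem_range] at this
  exact this

include hk2 hkn h0S in
lemma SpartF_nonempty : (SpartF n S).Nonempty :=
  ⟨⟨0, by omega⟩, by rw [mem_SpartF]; exact h0S⟩

include hS hSne in
lemma exists_not_S : ∃ t, t < k ∧ t ∉ S := by
  obtain ⟨t, ht1, ht2⟩ := Finset.exists_of_ssubset (lt_of_le_of_ne hS hSne)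
  rw [Finset.mem_range] at ht1
  exact ⟨t, ht1, ht2⟩

include hk2 hkn hS hSne in
lemma TpartF_nonempty : (TpartF n k S).Nonempty := by
  obtain ⟨t, ht1, ht2⟩ := exists_not_S hS hSne
  exact ⟨⟨t, by omega⟩, by rw [mem_TpartF]; exact ⟨ht1, ht2⟩⟩

include hkn hS hc in
lemma SpartF_ne_block {A : Finset (Fin n)} (hA : A ∈ blocksOf n k c) : SpartF n S ≠ A := by
  intro h
  by_cases hkn' : k < n
  · rw [mem_blocksOf hkn'] at hA
    obtain ⟨l, hl, rfl⟩ := hA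
    obtain ⟨x, hx⟩ := block_nonempty hc hkn' hl
    have h1 := block_ge hc hl hx
    have h2 := SpartF_lt hkn hS (h ▸ hx)
    omega
  · rw [blocksOf, if_neg hkn'] at hA
    exact absurd hA (Finset.notMem_empty A)

include hc in
lemma TpartF_ne_block {A : Finset (Fin n)} (hA : A ∈ blocksOf n k c) : TpartF n k S ≠ A := by
  intro h
  by_cases hkn' : k < n
  · rw [mem_blocksOf hkn'] at hA
    obtain ⟨l, hl, rfl⟩ := hA
    obtain ⟨x, hx⟩ := block_nonempty hc hkn' hl
    have h1 := block_ge hc hl hx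
    have h2 := (mem_TpartF.1 (h ▸ hx)).1
    omega
  · rw [blocksOf, if_neg hkn'] at hA
    exact absurd hA (Finset.notMem_empty A)

include hk2 hkn h0S in
lemma SpartF_ne_TpartF : SpartF n S ≠ TpartF n k S := by
  intro h
  have h0 : (⟨0, by omega⟩ : Fin n) ∈ SpartF n S := by rw [mem_SpartF]; exact h0S
  rw [h, mem_TpartF] at h0
  exact h0.2 h0S

lemma mem_buildP {A : Finset (Fin n)} :
    A ∈ buildP n k S c ↔ A = SpartF n S ∨ A = TpartF n k S ∨ A ∈ blocksOf n k c := by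
  simp [buildP]

include hk2 hkn hS h0S hSne hc in
lemma buildP_partition : IsPartitionOf n (buildP n k S c) := by
  constructor
  · intro A hA
    rcases mem_buildP.1 hA with rfl | rfl | h
    · exact SpartF_nonempty hk2 hkn h0S
    · exact TpartF_nonempty hk2 hkn hS hSne
    · by_cases hkn' : k < n
      · rw [mem_blocksOf hkn'] at h
        obtain ⟨l, hl, rfl⟩ := h
        exact block_nonempty hc hkn' hl
      · rw [blocksOf, if_neg hkn'] at h
        exact absurd h (Finset.notMem_empty A)
  · intro x
    by_cases hx : (x:ℕ) < k
    · by_cases hxS : (x:ℕ) ∈ S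
      · refine ⟨SpartF n S, ⟨mem_buildP.2 (Or.inl rfl), mem_SpartF.2 hxS⟩, ?_⟩
        rintro A ⟨hA, hxA⟩
        rcases mem_buildP.1 hA with rfl | rfl | h
        · rfl
        · exact absurd hxS (mem_TpartF.1 hxA).2
        · exfalso
          have hkn' : k < n := by
            by_contra hkn'
            rw [blocksOf, if_neg hkn'] at h
            exact absurd h (Finset.notMem_empty A)
          rw [mem_blocksOf hkn'] at h
          obtain ⟨l, hl, rfl⟩ := h
          have := block_ge hc hl hxA
          omega
      · refine ⟨TpartF n k S, ⟨mem_buildP.2 (Or.inr (Or.inl rfl)), mem_TpartF.2 ⟨hx, hxS⟩⟩, ?_⟩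
        rintro A ⟨hA, hxA⟩
        rcases mem_buildP.1 hA with rfl | rfl | h
        · exact absurd (mem_SpartF.1 hxA) hxS
        · rfl
        · exfalso
          have hkn' : k < n := by
            by_contra hkn'
            rw [blocksOf, if_neg hkn'] at h
            exact absurd h (Finset.notMem_empty A)
          rw [mem_blocksOf hkn'] at h
          obtain ⟨l, hl, rfl⟩ := h
          have := block_ge hc hl hxA
          omega
    · push_neg at hx
      have hkn' : k < n := lt_of_le_of_lt hx x.isLt
      obtain ⟨l, hl, hmem⟩ := block_cover hc hx
      refine ⟨Ipart n l (nxt c n l), ⟨mem_buildP.2 (Or.inr (Or.inr ((mem_blocksOf hkn').2 ⟨l, hl, rfl⟩))), hmem⟩, ?_⟩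
      rintro A ⟨hA, hxA⟩
      rcases mem_buildP.1 hA with rfl | rfl | h
      · exact absurd (SpartF_lt hkn hS hxA) (by omega)
      · exact absurd (mem_TpartF.1 hxA).1 (by omega)
      · rw [mem_blocksOf hkn'] at h
        obtain ⟨l', hl', rfl⟩ := h
        by_cases hll : l' = l
        · subst hll; rfl
        · exfalso
          rcases lt_trichotomy l' l with hlt | hlt | hlt
          · exact block_key hc hl' hl hlt hxA hmem
          · exact hll hlt
          · exact block_key hc hl hl' hlt hmem hxA

include hk2 hkn hS h0S hSne hc in
lemma buildP_card (hcard : (k = n ∧ d = 2) ∨ (k < n ∧ c.card + 3 = d)) :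
    (buildP n k S c).card = d := by
  rw [buildP, Finset.card_insert_of_notMem, Finset.card_insert_of_notMem]
  · rcases hcard with ⟨h1, h2⟩ | ⟨h1, h2⟩
    · rw [blocksOf, if_neg (by omega)]
      simp [h2]
    · rw [card_blocksOf hc h1]
      omega
  · intro h
    exact TpartF_ne_block hc h rfl
  · rw [Finset.mem_insert]
    rintro (h | h)
    · exact SpartF_ne_TpartF hk2 hkn h0S h
    · exact SpartF_ne_block hkn hS hc h rfl

include hkn hS in
lemma buildP_union : SpartF n S ∪ TpartF n k S
    = Finset.univ.filter (fun x : Fin n => (x : ℕ) < k) := by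
  ext x
  simp only [Finset.mem_union, mem_SpartF, mem_TpartF, Finset.mem_filter, Finset.mem_univ,
    true_and]
  constructor
  · rintro (h | h)
    · have := hS h; rw [Finset.mem_range] at this; exact this
    · exact h.1
  · intro h
    by_cases hxS : (x:ℕ) ∈ S
    · exact Or.inl hxS
    · exact Or.inr ⟨h, hxS⟩

include hk2 hkn hS h0S hSne hc in
lemma buildP_good : IsGoodPartition n (buildP n k S c) := by
  refine ⟨SpartF n S, mem_buildP.2 (Or.inl rfl), TpartF n k S,
    mem_buildP.2 (Or.inr (Or.inl rfl)), SpartF_ne_TpartF hk2 hkn h0S, ⟨k, buildP_union hkn hS⟩, ?_⟩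
  intro A hA hA1 hA2
  rcases mem_buildP.1 hA with rfl | rfl | h
  · exact absurd rfl hA1
  · exact absurd rfl hA2
  · have hkn' : k < n := by
      by_contra hkn'
      rw [blocksOf, if_neg hkn'] at h
      exact absurd h (Finset.notMem_empty A)
    rw [mem_blocksOf hkn'] at h
    obtain ⟨l, _, rfl⟩ := h
    exact ⟨l, nxt c n l, rfl⟩

end Build

section Inj
variable {n d : ℕ}

lemma blocks_sub {k : ℕ} {c c' : Finset ℕ} (hc : c ⊆ Finset.Ico (k+1) n)
    (hc' : c' ⊆ Finset.Ico (k+1) n) (hkn' : k < n)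
    (h : blocksOf n k c = blocksOf n k c') : c ⊆ c' := by
  intro t ht
  have htI := hc ht
  rw [Finset.mem_Ico] at htI
  have hB : Ipart n t (nxt c n t) ∈ blocksOf n k c :=
    (mem_blocksOf hkn').2 ⟨t, Finset.mem_insert_of_mem ht, rfl⟩
  rw [h, mem_blocksOf hkn'] at hB
  obtain ⟨l', hl', hBeq⟩ := hB
  have hl'n : l' < n := by
    rcases Finset.mem_insert.1 hl' with rfl | hmem
    · exact hkn'
    · have := hc' hmem
      rw [Finset.mem_Ico] at this
      omega
  have h1 : (⟨t, by omega⟩ : Fin n) ∈ Ipart n t (nxt c n t) :=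
    mem_Ipart.2 ⟨le_refl _, nxt_gt (by omega)⟩
  have h2 : (⟨l', hl'n⟩ : Fin n) ∈ Ipart n l' (nxt c' n l') :=
    mem_Ipart.2 ⟨le_refl _, nxt_gt hl'n⟩
  rw [hBeq] at h1
  rw [← hBeq] at h2
  have e1 := (mem_Ipart.1 h1).1
  have e2 := (mem_Ipart.1 h2).1
  simp only at e1 e2
  have hteq : t = l' := by omega
  subst hteq
  rcases Finset.mem_insert.1 hl' with h' | h'
  · omega
  · exact h'

lemma buildP_inj {k k' : ℕ} {S c S' c' : Finset ℕ}
    (hk2 : 2 ≤ k) (hkn : k ≤ n) (hS : S ⊆ Finset.range k) (h0S : 0 ∈ S)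
    (hSne : S ≠ Finset.range k) (hc : c ⊆ Finset.Ico (k+1) n)
    (hk2' : 2 ≤ k') (hkn' : k' ≤ n) (hS' : S' ⊆ Finset.range k') (h0S' : 0 ∈ S')
    (hSne' : S' ≠ Finset.range k') (hc' : c' ⊆ Finset.Ico (k'+1) n)
    (heq : buildP n k S c = buildP n k' S' c') : k = k' ∧ S = S' ∧ c = c' := by
  have hpart := buildP_partition hk2 hkn hS h0S hSne hc
  -- S = S'
  have hSS : S = S' := by
    have hx0 : (⟨0, by omega⟩ : Fin n) ∈ SpartF n S := mem_SpartF.2 h0S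
    have hx0' : (⟨0, by omega⟩ : Fin n) ∈ SpartF n S' := mem_SpartF.2 h0S'
    have hmem : SpartF n S ∈ buildP n k S c := mem_buildP.2 (Or.inl rfl)
    have hmem' : SpartF n S' ∈ buildP n k S c := by
      rw [heq]; exact mem_buildP.2 (Or.inl rfl)
    obtain ⟨B, _, hB⟩ := hpart.2 ⟨0, by omega⟩
    have e1 := hB (SpartF n S) ⟨hmem, hx0⟩
    have e2 := hB (SpartF n S') ⟨hmem', hx0'⟩
    have hSp : SpartF n S = SpartF n S' := by rw [e1, e2]
    ext t
    constructor
    · intro htS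
      have htk : t < n := by
        have := hS htS; rw [Finset.mem_range] at this; omega
      have : (⟨t, htk⟩ : Fin n) ∈ SpartF n S := mem_SpartF.2 htS
      rw [hSp] at this
      exact mem_SpartF.1 this
    · intro htS
      have htk : t < n := by
        have := hS' htS; rw [Finset.mem_range] at this; omega
      have : (⟨t, htk⟩ : Fin n) ∈ SpartF n S' := mem_SpartF.2 htS
      rw [← hSp] at this
      exact mem_SpartF.1 this
  subst hSS
  -- k = k'
  have hkk : k = k' := by
    have key : ∀ a b : ℕ, 2 ≤ a → a ≤ n → S ⊆ Finset.range a → S ≠ Finset.range a →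
        a < b → b ≤ n → (TpartF n a S = TpartF n b S) → False := by
      intro a b ha2 han hSa hSnea hab hbn hT
      have hbS : a ∉ S := fun hmem => by
        have := hSa hmem; rw [Finset.mem_range] at this; omega
      have h1 : (⟨a, by omega⟩ : Fin n) ∈ TpartF n b S :=
        mem_TpartF.2 ⟨show a < b from hab, hbS⟩
      rw [← hT, mem_TpartF] at h1
      have h2 : a < a := h1.1
      omega
    have hTmem : TpartF n k S ∈ buildP n k S c := mem_buildP.2 (Or.inr (Or.inl rfl))
    have hTmem' : TpartF n k' S ∈ buildP n k S c := by
      rw [heq]; exact mem_buildP.2 (Or.inr (Or.inl rfl))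
    obtain ⟨t, ht1, ht2⟩ := exists_not_S hS hSne
    obtain ⟨t', ht1', ht2'⟩ := exists_not_S hS' hSne'
    rcases lt_trichotomy k k' with h | h | h
    · -- t witness is in both
      have hx : (⟨t, by omega⟩ : Fin n) ∈ TpartF n k S := mem_TpartF.2 ⟨ht1, ht2⟩
      have hx' : (⟨t, by omega⟩ : Fin n) ∈ TpartF n k' S :=
        mem_TpartF.2 ⟨show t < k' by omega, ht2⟩
      obtain ⟨B, _, hB⟩ := hpart.2 ⟨t, by omega⟩
      have e1 := hB (TpartF n k S) ⟨hTmem, hx⟩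
      have e2 := hB (TpartF n k' S) ⟨hTmem', hx'⟩
      exact (key k k' hk2 hkn hS hSne h hkn' (e1.trans e2.symm)).elim
    · exact h
    · have hx : (⟨t', by omega⟩ : Fin n) ∈ TpartF n k' S := mem_TpartF.2 ⟨ht1', ht2'⟩
      have hx' : (⟨t', by omega⟩ : Fin n) ∈ TpartF n k S :=
        mem_TpartF.2 ⟨show t' < k by omega, ht2'⟩
      obtain ⟨B, _, hB⟩ := hpart.2 ⟨t', by omega⟩
      have e1 := hB (TpartF n k S) ⟨hTmem, hx'⟩
      have e2 := hB (TpartF n k' S) ⟨hTmem', hx⟩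
      exact (key k' k hk2' hkn' hS' hSne' h hkn (e2.trans e1.symm)).elim
  subst hkk
  refine ⟨rfl, rfl, ?_⟩
  -- c = c'
  by_cases hkn2 : k < n
  · have hbl : blocksOf n k c = blocksOf n k c' := by
      ext A
      constructor
      · intro hA
        have : A ∈ buildP n k S c' := by
          rw [← heq]
          exact mem_buildP.2 (Or.inr (Or.inr hA))
        rcases mem_buildP.1 this with rfl | rfl | h
        · exact absurd rfl (SpartF_ne_block hkn hS hc hA)
        · exact absurd rfl (TpartF_ne_block hc hA)
        · exact h
      · intro hA
        have : A ∈ buildP n k S c := by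
          rw [heq]
          exact mem_buildP.2 (Or.inr (Or.inr hA))
        rcases mem_buildP.1 this with rfl | rfl | h
        · exact absurd rfl (SpartF_ne_block hkn' hS' hc' hA)
        · exact absurd rfl (TpartF_ne_block hc' hA)
        · exact h
    exact Finset.Subset.antisymm (blocks_sub hc hc' hkn2 hbl) (blocks_sub hc' hc hkn2 hbl.symm)
  · have h1 : c = ∅ := by
      rw [← Finset.subset_empty]
      intro t ht
      have := hc ht
      rw [Finset.mem_Ico] at this
      omega
    have h2 : c' = ∅ := by
      rw [← Finset.subset_empty]
      intro t ht
      have := hc' ht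
      rw [Finset.mem_Ico] at this
      omega
    rw [h1, h2]

end Inj

def minvF {n : ℕ} (A : Finset (Fin n)) : ℕ :=
  WithTop.untopD 0 ((A.image (fun x : Fin n => (x:ℕ))).min)

lemma minvF_spec {n : ℕ} {A : Finset (Fin n)} (h : A.Nonempty) :
    ∃ x ∈ A, (x:ℕ) = minvF A ∧ ∀ y ∈ A, minvF A ≤ (y:ℕ) := by
  have hs : (A.image (fun x : Fin n => (x:ℕ))).Nonempty := h.image _
  have hmin : (A.image (fun x : Fin n => (x:ℕ))).min
      = (((A.image (fun x : Fin n => (x:ℕ))).min' hs : ℕ) : WithTop ℕ) :=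
    (Finset.coe_min' hs).symm
  have hb := Finset.min'_mem _ hs
  rw [Finset.mem_image] at hb
  obtain ⟨x, hxA, hx⟩ := hb
  have hval : minvF A = (A.image (fun x : Fin n => (x:ℕ))).min' hs := by
    rw [minvF, hmin]
    rfl
  refine ⟨x, hxA, by rw [hval, hx], ?_⟩
  intro y hy
  rw [hval]
  exact Finset.min'_le _ _ (Finset.mem_image_of_mem _ hy)

section Surj

lemma buildP_surj_aux {n d k : ℕ} {P : Finset (Finset (Fin n))} {B1 B2 : Finset (Fin n)}
    (hn : 2 ≤ n) (hk2 : 2 ≤ k) (hkn : k ≤ n)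
    (hpart : IsPartitionOf n P) (hcard : P.card = d)
    (hB1 : B1 ∈ P) (hB2 : B2 ∈ P) (hne : B1 ≠ B2)
    (hun : B1 ∪ B2 = Finset.univ.filter (fun x : Fin n => (x:ℕ) < k))
    (h0 : (⟨0, by omega⟩ : Fin n) ∈ B1)
    (hint : ∀ A ∈ P, A ≠ B1 → A ≠ B2 →
      ∃ l m : ℕ, A = Finset.univ.filter (fun x : Fin n => l ≤ (x:ℕ) ∧ (x:ℕ) < m)) :
    ∃ k' S c, (2 ≤ k' ∧ k' ≤ n ∧ S ⊆ Finset.range k' ∧ 0 ∈ S ∧ S ≠ Finset.range k' ∧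
      c ⊆ Finset.Ico (k'+1) n ∧ ((k' = n ∧ d = 2) ∨ (k' < n ∧ c.card + 3 = d))) ∧
      buildP n k' S c = P := by
  classical
  set S : Finset ℕ := B1.image (fun x : Fin n => (x:ℕ)) with hSdef
  set Q : Finset (Finset (Fin n)) := P \ {B1, B2} with hQdef
  have hQ : ∀ {A}, A ∈ Q ↔ A ∈ P ∧ A ≠ B1 ∧ A ≠ B2 := by
    intro A
    simp [hQdef, Finset.mem_sdiff, Finset.mem_insert, not_or]
  have huniq : ∀ {A B : Finset (Fin n)} {x : Fin n}, A ∈ P → B ∈ P → x ∈ A → x ∈ B → A = B := by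
    intro A B x hA hB hxA hxB
    obtain ⟨C, _, hC⟩ := hpart.2 x
    rw [hC A ⟨hA, hxA⟩, hC B ⟨hB, hxB⟩]
  have hmemval : ∀ {x : Fin n}, (x:ℕ) ∈ S ↔ x ∈ B1 := by
    intro x
    rw [hSdef, Finset.mem_image]
    constructor
    · rintro ⟨y, hy, hyx⟩
      have : y = x := Fin.ext hyx
      rwa [← this]
    · intro hx
      exact ⟨x, hx, rfl⟩
  have hB1lt : ∀ {x : Fin n}, x ∈ B1 → (x:ℕ) < k := by
    intro x hx
    have : x ∈ B1 ∪ B2 := Finset.mem_union_left _ hx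
    rw [hun, Finset.mem_filter] at this
    exact this.2
  have hB2lt : ∀ {x : Fin n}, x ∈ B2 → (x:ℕ) < k := by
    intro x hx
    have : x ∈ B1 ∪ B2 := Finset.mem_union_right _ hx
    rw [hun, Finset.mem_filter] at this
    exact this.2
  have hQge : ∀ {A}, A ∈ Q → ∀ {x : Fin n}, x ∈ A → k ≤ (x:ℕ) := by
    intro A hA x hx
    by_contra hlt
    push_neg at hlt
    have hxu : x ∈ B1 ∪ B2 := by
      rw [hun, Finset.mem_filter]
      exact ⟨Finset.mem_univ x, hlt⟩
    obtain ⟨hAP, hA1, hA2⟩ := hQ.1 hA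
    rcases Finset.mem_union.1 hxu with h | h
    · exact hA1 (huniq hAP hB1 hx h)
    · exact hA2 (huniq hAP hB2 hx h)
  have hQne : ∀ {A}, A ∈ Q → A.Nonempty := fun hA => hpart.1 _ (hQ.1 hA).1
  have hIco : ∀ {A}, A ∈ Q → ∀ {x y z : Fin n}, x ∈ A → y ∈ A →
      (x:ℕ) ≤ (z:ℕ) → (z:ℕ) ≤ (y:ℕ) → z ∈ A := by
    intro A hA x y z hx hy hxz hzy
    obtain ⟨hAP, hA1, hA2⟩ := hQ.1 hA
    obtain ⟨l, m, hAeq⟩ := hint A hAP hA1 hA2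
    rw [hAeq, Finset.mem_filter] at hx hy ⊢
    refine ⟨Finset.mem_univ z, ?_, ?_⟩
    · omega
    · omega
  set L : Finset ℕ := Q.image minvF with hLdef
  set c : Finset ℕ := L.erase k with hcdef
  -- c is in range
  have hcIco : c ⊆ Finset.Ico (k+1) n := by
    intro t ht
    rw [hcdef, Finset.mem_erase] at ht
    obtain ⟨htk, htL⟩ := ht
    rw [hLdef, Finset.mem_image] at htL
    obtain ⟨A, hA, rfl⟩ := htL
    obtain ⟨x, hxA, hxval, _⟩ := minvF_spec (hQne hA)
    rw [Finset.mem_Ico]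
    have h1 := hQge hA hxA
    have h2 := x.isLt
    omega
  -- the key block identity
  have hblock : ∀ {A}, A ∈ Q → A = Ipart n (minvF A) (nxt c n (minvF A)) := by
    intro A hA
    obtain ⟨x0, hx0A, hx0val, hx0min⟩ := minvF_spec (hQne hA)
    have hkl : k ≤ minvF A := by
      have := hQge hA hx0A
      omega
    ext x
    rw [mem_Ipart]
    constructor
    · intro hx
      refine ⟨hx0min x hx, ?_⟩
      by_contra hge
      push_neg at hge
      rcases nxt_cases c n (minvF A) with hcase | ⟨hmem, hgt⟩
      · have := x.isLt
        omega
      · set t := nxt c n (minvF A) with htdef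
        have htL : t ∈ L := Finset.mem_of_mem_erase (hcdef ▸ hmem)
        rw [hLdef, Finset.mem_image] at htL
        obtain ⟨A', hA', ht'⟩ := htL
        obtain ⟨xt, hxtA', hxtval, _⟩ := minvF_spec (hQne hA')
        rw [ht'] at hxtval
        have hxtA : xt ∈ A := hIco hA hx0A hx (by omega) (by omega)
        have : A = A' := huniq (hQ.1 hA).1 (hQ.1 hA').1 hxtA hxtA'
        rw [← this] at ht'
        omega
    · rintro ⟨hlx, hxlt⟩
      obtain ⟨C, ⟨hCP, hxC⟩, _⟩ := hpart.2 x
      have hCne1 : C ≠ B1 := by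
        intro h
        subst h
        have := hB1lt hxC
        omega
      have hCne2 : C ≠ B2 := by
        intro h
        subst h
        have := hB2lt hxC
        omega
      have hCQ : C ∈ Q := hQ.2 ⟨hCP, hCne1, hCne2⟩
      obtain ⟨xC, hxCC, hxCval, hxCmin⟩ := minvF_spec (hQne hCQ)
      have hl'x : minvF C ≤ (x:ℕ) := hxCmin x hxC
      rcases le_or_gt (minvF C) (minvF A) with hle | hgt
      · -- the element with value minvF A is in C, hence A = C
        have hlval : minvF A < n := lt_of_le_of_lt hlx x.isLt
        have hzC : (⟨minvF A, hlval⟩ : Fin n) ∈ C := by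
          apply hIco hCQ hxCC hxC
          · rw [hxCval]
            exact hle
          · exact hlx
        have hz0 : (⟨minvF A, hlval⟩ : Fin n) = x0 := by
          apply Fin.ext
          show minvF A = (x0:ℕ)
          omega
        rw [hz0] at hzC
        have : A = C := huniq (hQ.1 hA).1 hCP hx0A hzC
        rw [this]
        exact hxC
      · -- minvF C is a cut point between minvF A and x, contradiction
        exfalso
        have hCL : minvF C ∈ L := Finset.mem_image_of_mem _ hCQ
        have hCc : minvF C ∈ c := by
          rw [hcdef, Finset.mem_erase]
          exact ⟨by omega, hCL⟩
        have := nxt_min (n := n) hCc hgt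
        omega
  -- now the cases on k
  by_cases hkn' : k < n
  · -- k ∈ L
    have hkL : k ∈ L := by
      obtain ⟨C, ⟨hCP, hxC⟩, _⟩ := hpart.2 ⟨k, hkn'⟩
      have hCne1 : C ≠ B1 := by
        intro h; subst h
        have := hB1lt hxC
        simp at this
      have hCne2 : C ≠ B2 := by
        intro h; subst h
        have := hB2lt hxC
        simp at this
      have hCQ : C ∈ Q := hQ.2 ⟨hCP, hCne1, hCne2⟩
      have : minvF C = k := by
        obtain ⟨xC, hxCC, hxCval, hxCmin⟩ := minvF_spec (hQne hCQ)
        have h1 := hQge hCQ hxCC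
        have h2 := hxCmin _ hxC
        simp at h2
        omega
      rw [hLdef, Finset.mem_image]
      exact ⟨C, hCQ, this⟩
    have hLins : insert k c = L := by
      rw [hcdef]
      exact Finset.insert_erase hkL
    have hblocks : blocksOf n k c = Q := by
      rw [blocksOf, if_pos hkn', hLins, hLdef, Finset.image_image]
      calc Q.image ((fun l => Ipart n l (nxt c n l)) ∘ minvF)
          = Q.image id := Finset.image_congr (fun A hA => (hblock (Finset.mem_coe.1 hA)).symm)
        _ = Q := Finset.image_id
    -- conclude
    refine ⟨k, S, c, ⟨hk2, hkn, ?_, ?_, ?_, hcIco, Or.inr ⟨hkn', ?_⟩⟩, ?_⟩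
    · intro t ht
      rw [hSdef, Finset.mem_image] at ht
      obtain ⟨x, hx, rfl⟩ := ht
      rw [Finset.mem_range]
      exact hB1lt hx
    · exact hmemval.2 h0
    · -- S ≠ range k
      intro hSr
      obtain ⟨y, hy⟩ := hpart.1 B2 hB2
      have hyk := hB2lt hy
      have : (y:ℕ) ∈ S := by rw [hSr, Finset.mem_range]; exact hyk
      rw [hmemval] at this
      exact hne (huniq hB1 hB2 this hy)
    · -- cardinality
      have hPins : P = insert B1 (insert B2 Q) := by
        ext A
        constructor
        · intro hA
          by_cases h1 : A = B1
          · exact Finset.mem_insert.2 (Or.inl h1)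
          · by_cases h2 : A = B2
            · exact Finset.mem_insert.2 (Or.inr (Finset.mem_insert.2 (Or.inl h2)))
            · exact Finset.mem_insert.2 (Or.inr (Finset.mem_insert.2
                (Or.inr (hQ.2 ⟨hA, h1, h2⟩))))
        · intro hA
          rcases Finset.mem_insert.1 hA with rfl | hA
          · exact hB1
          · rcases Finset.mem_insert.1 hA with rfl | hA
            · exact hB2
            · exact (hQ.1 hA).1
      have hminj : Set.InjOn minvF (Q : Set (Finset (Fin n))) := by
        intro A hA A' hA' hmm
        rw [Finset.mem_coe] at hA hA'
        obtain ⟨x, hx, hxval, _⟩ := minvF_spec (hQne hA)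
        obtain ⟨x', hx', hxval', _⟩ := minvF_spec (hQne hA')
        have : x = x' := Fin.ext (by rw [hxval, hxval', hmm])
        rw [this] at hx
        exact huniq (hQ.1 hA).1 (hQ.1 hA').1 hx hx'
      have hQcard : Q.card = L.card := (Finset.card_image_of_injOn hminj).symm
      have hLcard : L.card = c.card + 1 := by
        rw [hcdef, Finset.card_erase_of_mem hkL]
        have : 1 ≤ L.card := Finset.card_pos.2 ⟨k, hkL⟩
        omega
      have hB1nm : B1 ∉ insert B2 Q := by
        rw [Finset.mem_insert]
        rintro (h | h)
        · exact hne h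
        · exact (hQ.1 h).2.1 rfl
      have hB2nm : B2 ∉ Q := fun h => (hQ.1 h).2.2 rfl
      rw [hPins, Finset.card_insert_of_notMem hB1nm, Finset.card_insert_of_notMem hB2nm]
        at hcard
      omega
    · -- buildP = P
      have hSp : SpartF n S = B1 := by
        ext x
        rw [mem_SpartF, hmemval]
      have hTp : TpartF n k S = B2 := by
        ext x
        rw [mem_TpartF]
        constructor
        · rintro ⟨hxlt, hxS⟩
          have hxu : x ∈ B1 ∪ B2 := by
            rw [hun, Finset.mem_filter]
            exact ⟨Finset.mem_univ x, hxlt⟩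
          rcases Finset.mem_union.1 hxu with h | h
          · exact absurd (hmemval.2 h) hxS
          · exact h
        · intro hx
          refine ⟨hB2lt hx, ?_⟩
          intro hxS
          rw [hmemval] at hxS
          exact hne (huniq hB1 hB2 hxS hx)
      rw [buildP, hSp, hTp, hblocks]
      ext A
      rw [Finset.mem_insert, Finset.mem_insert]
      constructor
      · rintro (rfl | rfl | h)
        · exact hB1
        · exact hB2
        · exact (hQ.1 h).1
      · intro hA
        by_cases h1 : A = B1
        · exact Or.inl h1
        · by_cases h2 : A = B2
          · exact Or.inr (Or.inl h2)
          · exact Or.inr (Or.inr (hQ.2 ⟨hA, h1, h2⟩))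
  · -- k = n
    have hkeq : k = n := by omega
    have hQempty : Q = ∅ := by
      rw [Finset.eq_empty_iff_forall_notMem]
      intro A hA
      obtain ⟨x, hx⟩ := hQne hA
      have := hQge hA hx
      have := x.isLt
      omega
    have hcempty : c = ∅ := by
      rw [hcdef, hLdef, hQempty]
      rfl
    have hPins : P = insert B1 {B2} := by
      ext A
      constructor
      · intro hA
        by_cases h1 : A = B1
        · exact Finset.mem_insert.2 (Or.inl h1)
        · by_cases h2 : A = B2
          · exact Finset.mem_insert.2 (Or.inr (Finset.mem_singleton.2 h2))
          · exact absurd (hQ.2 ⟨hA, h1, h2⟩) (by rw [hQempty]; exact Finset.notMem_empty A)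
      · intro hA
        rcases Finset.mem_insert.1 hA with rfl | hA
        · exact hB1
        · rw [Finset.mem_singleton] at hA
          rw [hA]
          exact hB2
    have hd2 : d = 2 := by
      rw [hPins, Finset.card_insert_of_notMem (by rw [Finset.mem_singleton]; exact hne),
        Finset.card_singleton] at hcard
      omega
    refine ⟨k, S, c, ⟨hk2, hkn, ?_, ?_, ?_, hcIco, Or.inl ⟨hkeq, hd2⟩⟩, ?_⟩
    · intro t ht
      rw [hSdef, Finset.mem_image] at ht
      obtain ⟨x, hx, rfl⟩ := ht
      rw [Finset.mem_range]
      exact hB1lt hx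
    · exact hmemval.2 h0
    · intro hSr
      obtain ⟨y, hy⟩ := hpart.1 B2 hB2
      have hyk := hB2lt hy
      have : (y:ℕ) ∈ S := by rw [hSr, Finset.mem_range]; exact hyk
      rw [hmemval] at this
      exact hne (huniq hB1 hB2 this hy)
    · have hSp : SpartF n S = B1 := by
        ext x
        rw [mem_SpartF, hmemval]
      have hTp : TpartF n k S = B2 := by
        ext x
        rw [mem_TpartF]
        constructor
        · rintro ⟨hxlt, hxS⟩
          have hxu : x ∈ B1 ∪ B2 := by
            rw [hun, Finset.mem_filter]
            exact ⟨Finset.mem_univ x, hxlt⟩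
          rcases Finset.mem_union.1 hxu with h | h
          · exact absurd (hmemval.2 h) hxS
          · exact h
        · intro hx
          refine ⟨hB2lt hx, ?_⟩
          intro hxS
          rw [hmemval] at hxS
          exact hne (huniq hB1 hB2 hxS hx)
      rw [buildP, hSp, hTp, blocksOf, if_neg hkn', hPins]
      simp

end Surj

lemma buildP_surj {n d : ℕ} (hn : 2 ≤ n) {P : Finset (Finset (Fin n))}
    (hpart : IsPartitionOf n P) (hcard : P.card = d) (hgood : IsGoodPartition n P) :
    ∃ k S c, (2 ≤ k ∧ k ≤ n ∧ S ⊆ Finset.range k ∧ 0 ∈ S ∧ S ≠ Finset.range k ∧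
      c ⊆ Finset.Ico (k+1) n ∧ ((k = n ∧ d = 2) ∨ (k < n ∧ c.card + 3 = d))) ∧
      buildP n k S c = P := by
  classical
  obtain ⟨A1, hA1, A2, hA2, hA12, ⟨m, hm⟩, hint⟩ := hgood
  have huniq : ∀ {A B : Finset (Fin n)} {x : Fin n}, A ∈ P → B ∈ P → x ∈ A → x ∈ B → A = B := by
    intro A B x hA hB hxA hxB
    obtain ⟨C, _, hC⟩ := hpart.2 x
    rw [hC A ⟨hA, hxA⟩, hC B ⟨hB, hxB⟩]
  set k := min m n with hkdef
  have hkn : k ≤ n := min_le_right _ _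
  have hm' : A1 ∪ A2 = Finset.univ.filter (fun x : Fin n => (x:ℕ) < k) := by
    rw [hm]
    ext x
    simp only [Finset.mem_filter, Finset.mem_univ, true_and]
    have := x.isLt
    omega
  have hk2 : 2 ≤ k := by
    obtain ⟨x1, hx1⟩ := hpart.1 A1 hA1
    obtain ⟨x2, hx2⟩ := hpart.1 A2 hA2
    have hne12 : x1 ≠ x2 := by
      intro h
      exact hA12 (huniq hA1 hA2 hx1 (h ▸ hx2))
    have hv1 : (x1:ℕ) < k := by
      have : x1 ∈ A1 ∪ A2 := Finset.mem_union_left _ hx1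
      rw [hm', Finset.mem_filter] at this
      exact this.2
    have hv2 : (x2:ℕ) < k := by
      have : x2 ∈ A1 ∪ A2 := Finset.mem_union_right _ hx2
      rw [hm', Finset.mem_filter] at this
      exact this.2
    have : (x1:ℕ) ≠ (x2:ℕ) := fun h => hne12 (Fin.ext h)
    omega
  have hx0 : (⟨0, by omega⟩ : Fin n) ∈ A1 ∪ A2 := by
    rw [hm', Finset.mem_filter]
    refine ⟨Finset.mem_univ _, ?_⟩
    show (0:ℕ) < k
    omega
  rcases Finset.mem_union.1 hx0 with h0 | h0
  · exact buildP_surj_aux hn hk2 hkn hpart hcard hA1 hA2 hA12 hm' h0 hint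
  · have hm'' : A2 ∪ A1 = Finset.univ.filter (fun x : Fin n => (x:ℕ) < k) := by
      rw [Finset.union_comm]; exact hm'
    exact buildP_surj_aux hn hk2 hkn hpart hcard hA2 hA1 hA12.symm hm'' h0
      (fun A hA hA2' hA1' => hint A hA hA1' hA2')

def Sk (k : ℕ) : Finset (Finset ℕ) :=
  ((Finset.range k).powerset).filter (fun S => 0 ∈ S ∧ S ≠ Finset.range k)

def Ck (n d k : ℕ) : Finset (Finset ℕ) :=
  ((Finset.Ico (k+1) n).powerset).filter
    (fun c => (k = n ∧ d = 2) ∨ (k < n ∧ c.card + 3 = d))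

def DataSet (n d : ℕ) : Finset (ℕ × Finset ℕ × Finset ℕ) :=
  (Finset.Icc 2 n).biUnion (fun k => {k} ×ˢ (Sk k ×ˢ Ck n d k))

lemma mem_DataSet {n d : ℕ} {p : ℕ × Finset ℕ × Finset ℕ} :
    p ∈ DataSet n d ↔ (2 ≤ p.1 ∧ p.1 ≤ n) ∧
      (p.2.1 ⊆ Finset.range p.1 ∧ 0 ∈ p.2.1 ∧ p.2.1 ≠ Finset.range p.1) ∧
      (p.2.2 ⊆ Finset.Ico (p.1+1) n ∧
        ((p.1 = n ∧ d = 2) ∨ (p.1 < n ∧ p.2.2.card + 3 = d))) := by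
  obtain ⟨k, S, c⟩ := p
  simp only [DataSet, Sk, Ck, Finset.mem_biUnion, Finset.mem_Icc, Finset.mem_product,
    Finset.mem_singleton, Finset.mem_filter, Finset.mem_powerset]
  constructor
  · rintro ⟨k', ⟨hk1, hk2⟩, rfl, ⟨hS1, hS2, hS3⟩, hc1, hc2⟩
    exact ⟨⟨hk1, hk2⟩, ⟨hS1, hS2, hS3⟩, hc1, hc2⟩
  · rintro ⟨⟨hk1, hk2⟩, ⟨hS1, hS2, hS3⟩, hc1, hc2⟩
    exact ⟨k, ⟨hk1, hk2⟩, rfl, ⟨hS1, hS2, hS3⟩, hc1, hc2⟩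

lemma card_Sk (k : ℕ) (hk : 1 ≤ k) : (Sk k).card = 2^(k-1) - 1 := by
  classical
  have h1 : Sk k = (((Finset.range k).powerset).filter (fun S => 0 ∈ S)).erase (Finset.range k) := by
    ext S
    simp only [Sk, Finset.mem_filter, Finset.mem_erase, Finset.mem_powerset]
    tauto
  have hmem : Finset.range k ∈ ((Finset.range k).powerset).filter (fun S => 0 ∈ S) := by
    simp [Finset.mem_filter, Finset.mem_powerset, Finset.mem_range]
    omega
  have h2 : (((Finset.range k).powerset).filter (fun S => 0 ∈ S)).card = 2^(k-1) := by
    have hb : (((Finset.range k).powerset).filter (fun S => 0 ∈ S)).card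
        = (((Finset.range k).erase 0).powerset).card := by
      apply Finset.card_nbij' (fun S => S.erase 0) (fun S => insert 0 S)
      · intro S hS
        simp only [Finset.mem_coe, Finset.mem_filter, Finset.mem_powerset] at hS
        simp only [Finset.mem_coe, Finset.mem_powerset]
        intro x hx
        simp only [Finset.mem_erase] at hx ⊢
        exact ⟨hx.1, hS.1 hx.2⟩
      · intro S hS
        simp only [Finset.mem_coe, Finset.mem_powerset] at hS
        simp only [Finset.mem_coe, Finset.mem_filter, Finset.mem_powerset]
        refine ⟨?_, Finset.mem_insert_self 0 S⟩
        intro x hx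
        rcases Finset.mem_insert.1 hx with rfl | hx
        · simp [Finset.mem_range]; omega
        · exact (Finset.erase_subset 0 _) (hS hx)
      · intro S hS
        simp only [Finset.mem_coe, Finset.mem_filter] at hS
        exact Finset.insert_erase hS.2
      · intro S hS
        simp only [Finset.mem_coe, Finset.mem_powerset] at hS
        apply Finset.erase_insert
        intro h0
        exact absurd (Finset.mem_erase.1 (hS h0)).1 (by simp)
    rw [hb, Finset.card_powerset, Finset.card_erase_of_mem (by simp [Finset.mem_range]; omega),
      Finset.card_range]
  rw [h1, Finset.card_erase_of_mem hmem, h2]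

lemma card_Ck (n d k : ℕ) (hk : k ≤ n) :
    (Ck n d k).card = if k = n then (if d = 2 then 1 else 0)
      else (if 3 ≤ d then Nat.choose (n-k-1) (d-3) else 0) := by
  classical
  by_cases h : k = n
  · subst h
    rw [if_pos rfl]
    have hempty : Finset.Ico (k+1) k = ∅ := Finset.Ico_eq_empty (by omega)
    rw [Ck, hempty, Finset.powerset_empty]
    by_cases hd : d = 2
    · subst hd
      rw [if_pos rfl]
      rw [Finset.filter_singleton, if_pos (by simp)]
      simp
    · rw [if_neg hd, Finset.filter_singleton, if_neg (by simp; omega)]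
      simp
  · have hkn : k < n := by omega
    rw [if_neg h]
    have hcond : Ck n d k = ((Finset.Ico (k+1) n).powerset).filter (fun c => c.card + 3 = d) := by
      apply Finset.filter_congr
      intro c _
      constructor
      · rintro (⟨h1, _⟩ | ⟨_, h2⟩)
        · omega
        · exact h2
      · intro hc
        exact Or.inr ⟨hkn, hc⟩
    rw [hcond]
    by_cases hd : 3 ≤ d
    · rw [if_pos hd]
      have : ((Finset.Ico (k+1) n).powerset).filter (fun c => c.card + 3 = d)
          = ((Finset.Ico (k+1) n).powerset).filter (fun c => c.card = d - 3) := by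
        apply Finset.filter_congr
        intro c _
        omega
      have harg : n - (k+1) = n - k - 1 := by omega
      rw [this, ← Finset.powersetCard_eq_filter, Finset.card_powersetCard, Nat.card_Ico, harg]
    · rw [if_neg hd]
      rw [Finset.filter_false_of_mem, Finset.card_empty]
      intro c _
      omega

lemma card_DataSet (n d : ℕ) (hn : 2 ≤ n) (hd : 2 ≤ d) :
    (DataSet n d).card = Tf n d := by
  classical
  have hdisj : ∀ k ∈ Finset.Icc 2 n, ∀ k' ∈ Finset.Icc 2 n, k ≠ k' →
      Disjoint ({k} ×ˢ (Sk k ×ˢ Ck n d k)) ({k'} ×ˢ (Sk k' ×ˢ Ck n d k')) := by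
    intro k _ k' _ hkk'
    rw [Finset.disjoint_left]
    intro p hp hp'
    simp only [Finset.mem_product, Finset.mem_singleton] at hp hp'
    exact hkk' (hp.1 ▸ hp'.1 ▸ rfl)
  rw [DataSet, Finset.card_biUnion hdisj]
  have hterm : ∀ k ∈ Finset.Icc 2 n,
      ({k} ×ˢ (Sk k ×ˢ Ck n d k)).card = (2^(k-1) - 1) *
        (if k = n then (if d = 2 then 1 else 0)
          else (if 3 ≤ d then Nat.choose (n-k-1) (d-3) else 0)) := by
    intro k hk
    rw [Finset.mem_Icc] at hk
    rw [Finset.card_product, Finset.card_product, Finset.card_singleton, one_mul,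
      card_Sk k (by omega), card_Ck n d k hk.2]
  rw [Finset.sum_congr rfl hterm]
  have hsplit : Finset.Icc 2 n = Finset.Ico 2 (n+1) := by
    ext x; simp [Finset.mem_Icc, Finset.mem_Ico]
  rw [hsplit, Finset.sum_Ico_succ_top hn]
  by_cases hd2 : d = 2
  · subst hd2
    rw [Tf, if_pos rfl]
    rw [if_pos rfl, if_pos rfl, Finset.sum_eq_zero, zero_add, mul_one]
    intro k hk
    rw [Finset.mem_Ico] at hk
    rw [if_neg (by omega), if_neg (by omega)]
    ring
  · rw [Tf, if_neg hd2, if_pos rfl, if_neg hd2, mul_zero, add_zero]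
    apply Finset.sum_congr rfl
    intro k hk
    rw [Finset.mem_Ico] at hk
    rw [if_neg (by omega), if_pos (by omega)]

theorem stmt_0 (n d : ℕ) (hn : 2 ≤ n) (hd : 2 ≤ d) :
    Nat.card {P : Finset (Finset (Fin n)) //
        IsPartitionOf n P ∧ P.card = d ∧ IsGoodPartition n P }
      = ∑ i ∈ (Finset.range (n + 1)).filter
          (fun i : ℕ => (i : ℤ) ≤ (n : ℤ) - d ∧ ((n : ℤ) - d - i) % 2 = 0), n.choose i := by
  classical
  have h1 : Nat.card {P : Finset (Finset (Fin n)) //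
      IsPartitionOf n P ∧ P.card = d ∧ IsGoodPartition n P}
      = (Finset.univ.filter (fun P : Finset (Finset (Fin n)) =>
          IsPartitionOf n P ∧ P.card = d ∧ IsGoodPartition n P)).card := by
    rw [Nat.card_eq_fintype_card]
    exact Fintype.card_subtype _
  have h2 : (DataSet n d).card = (Finset.univ.filter (fun P : Finset (Finset (Fin n)) =>
      IsPartitionOf n P ∧ P.card = d ∧ IsGoodPartition n P)).card := by
    apply Finset.card_bij (fun p _ => buildP n p.1 p.2.1 p.2.2)
    · intro p hp
      obtain ⟨⟨hk2, hkn⟩, ⟨hS, h0S, hSne⟩, hc, hcond⟩ := mem_DataSet.1 hp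
      rw [Finset.mem_filter]
      exact ⟨Finset.mem_univ _, buildP_partition hk2 hkn hS h0S hSne hc,
        buildP_card hk2 hkn hS h0S hSne hc hcond, buildP_good hk2 hkn hS h0S hSne hc⟩
    · intro p1 hp1 p2 hp2 heq
      obtain ⟨k1, S1, c1⟩ := p1
      obtain ⟨k2, S2, c2⟩ := p2
      obtain ⟨⟨hk2, hkn⟩, ⟨hS, h0S, hSne⟩, hc, _⟩ := mem_DataSet.1 hp1
      obtain ⟨⟨hk2', hkn'⟩, ⟨hS', h0S', hSne'⟩, hc', _⟩ := mem_DataSet.1 hp2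
      obtain ⟨e1, e2, e3⟩ :=
        buildP_inj hk2 hkn hS h0S hSne hc hk2' hkn' hS' h0S' hSne' hc' heq
      subst e1; subst e2; subst e3
      rfl
    · intro PP hPP
      rw [Finset.mem_filter] at hPP
      obtain ⟨_, hpart, hcard, hgood⟩ := hPP
      obtain ⟨k, S, c, ⟨hk2, hkn, hS, h0S, hSne, hc, hcond⟩, heq⟩ :=
        buildP_surj hn hpart hcard hgood
      exact ⟨(k, S, c), mem_DataSet.2 ⟨⟨hk2, hkn⟩, ⟨hS, h0S, hSne⟩, hc, hcond⟩, heq⟩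
  rw [h1, ← h2, card_DataSet n d hn hd, TR n hn d hd]
  rfl
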